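/- arXiv:1411.5979 — 3 statements merged into one kernel-verified Lean document; each statement's English description precedes it below -/
import Mathlib

section
/- Let 𝔤 be a finite-dimensional real Lie algebra and D a derivation of 𝔤. Define 𝔤⁺ (resp. 𝔤⁻, 𝔤⁰) as the sum of generalized eigenspaces of D corresponding to eigenvalues with positive (resp. negative, zero) real part. Then 𝔤⁺, 𝔤⁻ and 𝔤⁰ are Lie subalgebras of 𝔤, and 𝔤⁺ and 𝔤⁻ are nilpotent. -/
open TensorProduct

/-- For an `ℝ`-linear endomorphism `D` of a real vector space `V` and a predicate `P` on `ℂ`,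
`spectralSubmodule D P` is the real subspace of `V` consisting of the vectors whose image in
the complexification `ℂ ⊗[ℝ] V` lies in the sum of the generalized eigenspaces of the
complexified endomorphism `D_ℂ` over all eigenvalues `α` satisfying `P α`.  For
`P α = (0 < α.re)` (resp. `α.re < 0`, `α.re = 0`) this is `𝔤⁺` (resp. `𝔤⁻`, `𝔤⁰`). -/
noncomputable def spectralSubmodule {V : Type*} [AddCommGroup V] [Module ℝ V]
    (D : V →ₗ[ℝ] V) (P : ℂ → Prop) : Submodule ℝ V :=
  Submodule.comap ((TensorProduct.mk ℝ ℂ V) 1)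
    (Submodule.restrictScalars ℝ
      (⨆ α ∈ {α : ℂ | P α}, Module.End.maxGenEigenspace (D.baseChange ℂ) α))

section Aux

/-- The bracket of generalized eigenvectors of a derivation-like endomorphism lies in the
generalized eigenspace of the sum of the eigenvalues. -/
lemma lie_mem_maxGenEigenspace_of_leibniz {R : Type*} [CommRing R] {M : Type*}
    [LieRing M] [LieAlgebra R M]
    (D : M →ₗ[R] M) (hD : ∀ a b : M, D ⁅a, b⁆ = ⁅D a, b⁆ + ⁅a, D b⁆)
    {α β : R} {x y : M} (hx : x ∈ Module.End.maxGenEigenspace D α)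
    (hy : y ∈ Module.End.maxGenEigenspace D β) :
    ⁅x, y⁆ ∈ Module.End.maxGenEigenspace D (α + β) := by
  classical
  rw [Module.End.mem_maxGenEigenspace] at hx hy ⊢
  obtain ⟨k₁, hk₁⟩ := hx
  obtain ⟨k₂, hk₂⟩ := hy
  set A : Module.End R M := D - α • 1 with hA
  set B : Module.End R M := D - β • 1 with hB
  set F : Module.End R M := D - (α + β) • 1 with hF
  set g : M ⊗[R] M →ₗ[R] M :=
    TensorProduct.lift (LinearMap.mk₂ R (fun u v : M => ⁅u, v⁆) add_lie smul_lie lie_add lie_smul)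
    with hg
  have hgt : ∀ u v : M, g (u ⊗ₜ v) = ⁅u, v⁆ := fun u v => rfl
  set f₁ : Module.End R (M ⊗[R] M) := A.rTensor M with hf₁def
  set f₂ : Module.End R (M ⊗[R] M) := B.lTensor M with hf₂def
  have h_comm_square : F ∘ₗ g = g ∘ₗ (f₁ + f₂) := by
    ext u v
    show F (g (u ⊗ₜ v)) = g ((f₁ + f₂) (u ⊗ₜ v))
    rw [hgt]
    simp only [hf₁def, hf₂def, LinearMap.add_apply, LinearMap.rTensor_tmul,
      LinearMap.lTensor_tmul, map_add, hgt]
    simp only [hF, hA, hB, LinearMap.sub_apply, LinearMap.smul_apply, Module.End.one_apply,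
      LinearMap.add_apply, hD, sub_lie, lie_sub, smul_lie, lie_smul, add_smul]
    abel
  have hf_comm : Commute f₁ f₂ := by
    ext u v
    simp [hf₁def, hf₂def, Module.End.mul_apply]
  have hf₁ : (f₁ ^ k₁) (x ⊗ₜ y) = 0 := by
    rw [hf₁def, LinearMap.rTensor_pow, LinearMap.rTensor_tmul, hk₁, zero_tmul]
  have hf₂ : (f₂ ^ k₂) (x ⊗ₜ y) = 0 := by
    rw [hf₂def, LinearMap.lTensor_pow, LinearMap.lTensor_tmul, hk₂, tmul_zero]
  refine ⟨k₁ + k₂, ?_⟩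
  have key : (F ^ (k₁ + k₂)) (g (x ⊗ₜ y)) = g (((f₁ + f₂) ^ (k₁ + k₂)) (x ⊗ₜ y)) := by
    rw [← LinearMap.comp_apply, Module.End.commute_pow_left_of_commute h_comm_square,
      LinearMap.comp_apply]
  rw [← hgt, key, hf_comm.add_pow']
  simp only [LinearMap.coe_sum, Finset.sum_apply, LinearMap.smul_apply]
  rw [map_sum]
  apply Finset.sum_eq_zero
  rintro ⟨i, j⟩ hij
  suffices h : (f₁ ^ i * f₂ ^ j) (x ⊗ₜ y) = 0 by
    rw [h, smul_zero, map_zero]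
  rw [Finset.HasAntidiagonal.mem_antidiagonal] at hij
  rcases le_or_gt k₁ i with hi | hi
  · rw [(hf_comm.pow_pow i j).eq, Module.End.mul_apply, Module.End.pow_map_zero_of_le hi hf₁,
      map_zero]
  · have hj : k₂ ≤ j := by omega
    rw [Module.End.mul_apply, Module.End.pow_map_zero_of_le hj hf₂, map_zero]

/-- Sums of generalized eigenspaces multiply under the bracket according to addition of the
index sets. -/
lemma lie_mem_biSup_of_sets {R : Type*} [CommRing R] {M : Type*}
    [LieRing M] [LieAlgebra R M]
    (D : M →ₗ[R] M) (hD : ∀ a b : M, D ⁅a, b⁆ = ⁅D a, b⁆ + ⁅a, D b⁆)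
    {s t r : Set R}
    (h : ∀ α ∈ s, ∀ β ∈ t, Module.End.maxGenEigenspace D α ≠ ⊥ → α + β ∈ r)
    {u v : M} (hu : u ∈ ⨆ α ∈ s, Module.End.maxGenEigenspace D α)
    (hv : v ∈ ⨆ β ∈ t, Module.End.maxGenEigenspace D β) :
    ⁅u, v⁆ ∈ ⨆ γ ∈ r, Module.End.maxGenEigenspace D γ := by
  have conv : ∀ q : Set R, (⨆ α ∈ q, Module.End.maxGenEigenspace D α) =
      ⨆ α : q, Module.End.maxGenEigenspace D α.1 :=
    fun q => iSup_subtype' (p := fun α => α ∈ q)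
      (f := fun α _ => Module.End.maxGenEigenspace D α)
  rw [conv] at hu hv ⊢
  refine Submodule.iSup_induction (motive := fun u => ⁅u, v⁆ ∈
      ⨆ γ : r, Module.End.maxGenEigenspace D γ.1) _ hu ?_ (by simp) ?_
  · intro a x hx
    refine Submodule.iSup_induction (motive := fun w => ⁅x, w⁆ ∈
        ⨆ γ : r, Module.End.maxGenEigenspace D γ.1) _ hv ?_ (by simp) ?_
    · intro b z hz
      by_cases hbot : Module.End.maxGenEigenspace D a.1 = ⊥
      · rw [hbot] at hx
        rw [Submodule.mem_bot] at hx
        rw [hx, zero_lie]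
        exact Submodule.zero_mem _
      · have h1 : ⁅x, z⁆ ∈ Module.End.maxGenEigenspace D (a.1 + b.1) :=
          lie_mem_maxGenEigenspace_of_leibniz D hD hx hz
        exact le_iSup (fun γ : r => Module.End.maxGenEigenspace D γ.1)
          ⟨a.1 + b.1, h a.1 a.2 b.1 b.2 hbot⟩ h1
    · intro w₁ w₂ h₁ h₂
      rw [lie_add]
      exact add_mem h₁ h₂
  · intro u₁ u₂ h₁ h₂
    rw [add_lie]
    exact add_mem h₁ h₂

variable {L : Type*} [LieRing L] [LieAlgebra ℝ L]

/-- The complexification of a derivation satisfies the Leibniz rule. -/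
lemma baseChange_leibniz (D : LieDerivation ℝ L L) (a b : ℂ ⊗[ℝ] L) :
    (D : L →ₗ[ℝ] L).baseChange ℂ ⁅a, b⁆ =
      ⁅(D : L →ₗ[ℝ] L).baseChange ℂ a, b⁆ + ⁅a, (D : L →ₗ[ℝ] L).baseChange ℂ b⁆ := by
  induction a using TensorProduct.induction_on with
  | zero => simp only [zero_lie, map_zero, add_zero, lie_zero, zero_add]
  | tmul z x =>
    induction b using TensorProduct.induction_on with
    | zero =>
      have e2 : ∀ c : ℂ ⊗[ℝ] L, ⁅c, (0 : ℂ ⊗[ℝ] L)⁆ = 0 := fun c => lie_zero c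
      rw [map_zero, e2, e2, map_zero, add_zero]
    | tmul w y =>
      rw [LieAlgebra.ExtendScalars.bracket_tmul, LinearMap.baseChange_tmul,
        LinearMap.baseChange_tmul, LinearMap.baseChange_tmul,
        LieAlgebra.ExtendScalars.bracket_tmul, LieAlgebra.ExtendScalars.bracket_tmul,
        ← TensorProduct.tmul_add]
      congr 1
      have : (D : L →ₗ[ℝ] L) ⁅x, y⁆ = D ⁅x, y⁆ := rfl
      rw [this, D.apply_lie_eq_add]
      have h1 : (D : L →ₗ[ℝ] L) x = D x := rfl
      have h2 : (D : L →ₗ[ℝ] L) y = D y := rfl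
      rw [h1, h2]
      abel
    | add b₁ b₂ h₁ h₂ =>
      have e3 : ∀ c d e : ℂ ⊗[ℝ] L, ⁅c, d + e⁆ = ⁅c, d⁆ + ⁅c, e⁆ := fun c d e => lie_add c d e
      rw [e3, map_add, h₁, h₂, map_add, e3, e3]
      abel
  | add a₁ a₂ h₁ h₂ =>
    simp only [add_lie, map_add, h₁, h₂]
    abel

lemma mk_one_bracket (x y : L) :
    (TensorProduct.mk ℝ ℂ L) 1 ⁅x, y⁆ =
      ⁅(TensorProduct.mk ℝ ℂ L) 1 x, (TensorProduct.mk ℝ ℂ L) 1 y⁆ := by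
  rw [TensorProduct.mk_apply, TensorProduct.mk_apply, TensorProduct.mk_apply,
    LieAlgebra.ExtendScalars.bracket_tmul, mul_one]

lemma mk_one_injective (V : Type*) [AddCommGroup V] [Module ℝ V] :
    Function.Injective ((TensorProduct.mk ℝ ℂ V) 1) := by
  have h : ∀ x : V,
      (TensorProduct.lid ℝ V) ((Complex.reLm.rTensor V) ((TensorProduct.mk ℝ ℂ V) 1 x)) = x := by
    intro x
    simp [TensorProduct.mk_apply]
  intro x y hxy
  rw [← h x, ← h y, hxy]

/-- The bracket-closure property of `spectralSubmodule` for predicates closed under addition. -/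
lemma spectralSubmodule_lie_mem (D : LieDerivation ℝ L L)
    {P : ℂ → Prop} (hP : ∀ α β, P α → P β → P (α + β)) {x y : L}
    (hx : x ∈ spectralSubmodule (D : L →ₗ[ℝ] L) P)
    (hy : y ∈ spectralSubmodule (D : L →ₗ[ℝ] L) P) :
    ⁅x, y⁆ ∈ spectralSubmodule (D : L →ₗ[ℝ] L) P := by
  simp only [spectralSubmodule, Submodule.mem_comap, Submodule.restrictScalars_mem] at hx hy ⊢
  rw [mk_one_bracket]
  exact lie_mem_biSup_of_sets _ (baseChange_leibniz D)
    (fun α hα β hβ _ => hP α β hα hβ) hx hy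

/-- Nilpotency of the spectral subalgebra corresponding to eigenvalues with positive value of an
additive real-valued function `w`. -/
lemma spectralSubmodule_nilpotent [FiniteDimensional ℝ L] (D : LieDerivation ℝ L L)
    (w : ℂ → ℝ) (hw : ∀ α β : ℂ, w (α + β) = w α + w β)
    {P : ℂ → Prop} (hPw : ∀ α, P α ↔ 0 < w α)
    (p : LieSubalgebra ℝ L)
    (hp : p.toSubmodule = spectralSubmodule (D : L →ₗ[ℝ] L) P) :
    LieRing.IsNilpotent p := by
  classical
  set M := ℂ ⊗[ℝ] L with hM
  set Dc : Module.End ℂ M := (D : L →ₗ[ℝ] L).baseChange ℂ with hDc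
  set E : ℂ → Submodule ℂ M := Dc.maxGenEigenspace with hE
  set S : Submodule ℂ M := ⨆ α ∈ {α : ℂ | P α}, E α with hSdef
  -- finitely many nonzero generalized eigenspaces
  have hfin : {α : ℂ | E α ≠ ⊥}.Finite :=
    WellFoundedGT.finite_ne_bot_of_iSupIndep (Module.End.independent_maxGenEigenspace Dc)
  set T : Set ℂ := {α : ℂ | P α ∧ E α ≠ ⊥} with hT
  have hTfin : T.Finite := hfin.subset fun α hα => hα.2
  obtain ⟨δ, mx, hδ0, hδle, hmx⟩ :
      ∃ δ mx : ℝ, 0 < δ ∧ (∀ α ∈ T, δ ≤ w α) ∧ (∀ α ∈ T, w α ≤ mx) := by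
    rcases T.eq_empty_or_nonempty with h | h
    · exact ⟨1, 0, one_pos, by simp [h], by simp [h]⟩
    · have hFne : hTfin.toFinset.Nonempty := by
        rwa [Set.Finite.toFinset_nonempty]
      refine ⟨hTfin.toFinset.inf' hFne w, hTfin.toFinset.sup' hFne w, ?_, ?_, ?_⟩
      · rw [Finset.lt_inf'_iff]
        intro α hα
        rw [Set.Finite.mem_toFinset] at hα
        exact (hPw α).mp hα.1
      · intro α hα
        exact Finset.inf'_le w (by rwa [Set.Finite.mem_toFinset])
      · intro α hα
        exact Finset.le_sup' w (by rwa [Set.Finite.mem_toFinset])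
  obtain ⟨n, hn⟩ : ∃ n : ℕ, mx < ((n : ℝ) + 1) * δ := by
    obtain ⟨n, hn⟩ := exists_nat_gt (mx / δ)
    refine ⟨n, ?_⟩
    have h1 : mx < n * δ := by rwa [div_lt_iff₀ hδ0] at hn
    nlinarith
  set G : ℕ → Submodule ℂ M := fun k => ⨆ α ∈ {α : ℂ | ((k : ℝ) + 1) * δ ≤ w α}, E α with hG
  -- `S` is contained in `G 0`
  have hS0 : S ≤ G 0 := by
    refine iSup₂_le fun α hα => ?_
    by_cases hbot : E α = ⊥
    · rw [hbot]; exact bot_le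
    · refine le_iSup₂_of_le α ?_ le_rfl
      have h1 := hδle α ⟨hα, hbot⟩
      simp only [Set.mem_setOf_eq, Nat.cast_zero, zero_add, one_mul]
      linarith
  -- brackets with `S` raise the level
  have hstep : ∀ (k : ℕ) (u v : M), u ∈ S → v ∈ G k → ⁅u, v⁆ ∈ G (k + 1) := by
    intro k u v hu hv
    refine lie_mem_biSup_of_sets Dc (baseChange_leibniz D) ?_ hu hv
    intro α hα β hβ hbot
    have h1 : δ ≤ w α := hδle α ⟨hα, hbot⟩
    have h2 : ((k : ℝ) + 1) * δ ≤ w β := hβ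
    show α + β ∈ {γ : ℂ | (((k + 1 : ℕ) : ℝ) + 1) * δ ≤ w γ}
    simp only [Set.mem_setOf_eq]
    rw [hw]
    push_cast
    nlinarith
  -- `G n` vanishes
  have hGn : ∀ z ∈ G n, z = 0 := by
    have hbotG : G n ≤ ⊥ := by
      refine iSup₂_le fun α hα => ?_
      by_cases hbot : E α = ⊥
      · exact le_of_eq hbot
      · exfalso
        have hpos : 0 < ((n : ℝ) + 1) * δ := by positivity
        have hPα : P α := (hPw α).mpr (lt_of_lt_of_le hpos hα)
        have h1 := hmx α ⟨hPα, hbot⟩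
        have h2 : ((n : ℝ) + 1) * δ ≤ w α := hα
        linarith
    intro z hz
    simpa using hbotG hz
  -- membership of elements of `p` in `S`
  have hmem : ∀ z : ↥p, (TensorProduct.mk ℝ ℂ L) 1 (z : L) ∈ S := by
    intro z
    have hz : (z : L) ∈ p.toSubmodule := z.2
    rw [hp] at hz
    simpa only [spectralSubmodule, Submodule.mem_comap, Submodule.restrictScalars_mem] using hz
  -- Engel's theorem
  rw [LieAlgebra.isNilpotent_iff_forall (R := ℝ)]
  intro x
  have key : ∀ (k : ℕ) (y : ↥p),
      (TensorProduct.mk ℝ ℂ L) 1 (((LieAlgebra.ad ℝ ↥p x ^ k) y : ↥p) : L) ∈ G k := by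
    intro k
    induction k with
    | zero =>
      intro y
      rw [pow_zero, Module.End.one_apply]
      exact hS0 (hmem y)
    | succ k ih =>
      intro y
      have h1 : (LieAlgebra.ad ℝ ↥p x ^ (k + 1)) y = ⁅x, (LieAlgebra.ad ℝ ↥p x ^ k) y⁆ := by
        rw [pow_succ', Module.End.mul_apply, LieAlgebra.ad_apply]
      rw [h1, LieSubalgebra.coe_bracket, mk_one_bracket]
      exact hstep k _ _ (hmem x) (ih y)
  refine ⟨n, ?_⟩
  ext y
  have h0 := hGn _ (key n y)
  have h1 : (((LieAlgebra.ad ℝ ↥p x ^ n) y : ↥p) : L) = 0 := by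
    apply mk_one_injective L
    rw [h0, map_zero]
  simpa using h1

end Aux

/-- For a derivation `D` of a finite-dimensional real Lie algebra `𝔤`,
the subspaces `𝔤⁺`, `𝔤⁻`, `𝔤⁰` (sums of generalized eigenspaces of `D` with eigenvalue real
part positive, negative, zero) are Lie subalgebras, and `𝔤⁺`, `𝔤⁻` are nilpotent. -/
theorem spectralSubmodule_isLieSubalgebra_and_nilpotent
    {L : Type*} [LieRing L] [LieAlgebra ℝ L] [FiniteDimensional ℝ L]
    (D : LieDerivation ℝ L L) :
    (∀ x ∈ spectralSubmodule (D : L →ₗ[ℝ] L) (fun α => 0 < α.re),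
      ∀ y ∈ spectralSubmodule (D : L →ₗ[ℝ] L) (fun α => 0 < α.re),
        ⁅x, y⁆ ∈ spectralSubmodule (D : L →ₗ[ℝ] L) (fun α => 0 < α.re)) ∧
    (∀ x ∈ spectralSubmodule (D : L →ₗ[ℝ] L) (fun α => α.re < 0),
      ∀ y ∈ spectralSubmodule (D : L →ₗ[ℝ] L) (fun α => α.re < 0),
        ⁅x, y⁆ ∈ spectralSubmodule (D : L →ₗ[ℝ] L) (fun α => α.re < 0)) ∧
    (∀ x ∈ spectralSubmodule (D : L →ₗ[ℝ] L) (fun α => α.re = 0),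
      ∀ y ∈ spectralSubmodule (D : L →ₗ[ℝ] L) (fun α => α.re = 0),
        ⁅x, y⁆ ∈ spectralSubmodule (D : L →ₗ[ℝ] L) (fun α => α.re = 0)) ∧
    (∀ p : LieSubalgebra ℝ L,
      p.toSubmodule = spectralSubmodule (D : L →ₗ[ℝ] L) (fun α => 0 < α.re) →
        LieRing.IsNilpotent p) ∧
    (∀ p : LieSubalgebra ℝ L,
      p.toSubmodule = spectralSubmodule (D : L →ₗ[ℝ] L) (fun α => α.re < 0) →
        LieRing.IsNilpotent p) := by
  refine ⟨?_, ?_, ?_, ?_, ?_⟩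
  · intro x hx y hy
    exact spectralSubmodule_lie_mem D (fun α β hα hβ => by
      show 0 < (α + β).re
      rw [Complex.add_re]
      linarith) hx hy
  · intro x hx y hy
    exact spectralSubmodule_lie_mem D (fun α β hα hβ => by
      show (α + β).re < 0
      rw [Complex.add_re]
      linarith) hx hy
  · intro x hx y hy
    exact spectralSubmodule_lie_mem D (fun α β hα hβ => by
      show (α + β).re = 0
      rw [Complex.add_re, hα, hβ, add_zero]) hx hy
  · intro p hp
    exact spectralSubmodule_nilpotent D Complex.re (fun α β => Complex.add_re α β)
      (fun α => Iff.rfl) p hp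
  · intro p hp
    exact spectralSubmodule_nilpotent D (fun α => -α.re)
      (fun α β => by simp [Complex.add_re]; ring) (fun α => by simp) p hp
end

section
/- Let π* : 𝔤 → 𝔥 be a surjective Lie algebra homomorphism between finite-dimensional real Lie algebras, and let D₁, D₂ be derivations of 𝔤 and 𝔥 respectively with π* ∘ D₁ = D₂ ∘ π*. Then π*(𝔤⁺) = 𝔥⁺, π*(𝔤⁻) = 𝔥⁻ and π*(𝔤⁰) = 𝔥⁰. -/
open TensorProduct

namespace SpectralAux

variable {V : Type*} [AddCommGroup V] [Module ℝ V]
variable {W : Type*} [AddCommGroup W] [Module ℝ W]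

/-- The real part projection `ℂ ⊗[ℝ] V → V`. -/
noncomputable def rp : ℂ ⊗[ℝ] V →ₗ[ℝ] V :=
  TensorProduct.lift ((LinearMap.lsmul ℝ V).comp Complex.reLm)

@[simp] lemma rp_tmul (c : ℂ) (v : V) : rp (c ⊗ₜ[ℝ] v) = c.re • v := rfl

/-- Complex conjugation on the complexification. -/
noncomputable def conjT : ℂ ⊗[ℝ] V →ₗ[ℝ] ℂ ⊗[ℝ] V :=
  TensorProduct.map Complex.conjAe.toLinearMap LinearMap.id

@[simp] lemma conjT_tmul (c : ℂ) (v : V) :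
    conjT (c ⊗ₜ[ℝ] v) = (starRingEnd ℂ c) ⊗ₜ[ℝ] v := rfl

lemma one_tmul_rp (u : ℂ ⊗[ℝ] V) :
    (1 : ℂ) ⊗ₜ[ℝ] (rp u) = (2⁻¹ : ℝ) • (u + conjT u) := by
  induction u using TensorProduct.induction_on with
  | zero => simp
  | tmul c v =>
      have h1 : (c + starRingEnd ℂ c) ⊗ₜ[ℝ] v = (2 * c.re) • ((1:ℂ) ⊗ₜ[ℝ] v) := by
        rw [TensorProduct.smul_tmul', Complex.add_conj]
        congr 1
        simp [Complex.real_smul]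
      rw [rp_tmul, conjT_tmul, TensorProduct.tmul_smul, ← TensorProduct.add_tmul, h1, smul_smul]
      congr 1
      ring
  | add x y hx hy =>
      rw [map_add, TensorProduct.tmul_add, hx, hy, map_add, ← smul_add]
      congr 1
      abel

lemma conjT_smul (c : ℂ) (u : ℂ ⊗[ℝ] V) :
    conjT (c • u) = (starRingEnd ℂ c) • conjT u := by
  induction u using TensorProduct.induction_on with
  | zero => simp
  | tmul d v => rw [TensorProduct.smul_tmul', conjT_tmul, smul_eq_mul, map_mul, conjT_tmul,
      TensorProduct.smul_tmul', smul_eq_mul]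
  | add x y hx hy => rw [smul_add, map_add, hx, hy, map_add, smul_add]

lemma conjT_baseChange (D : V →ₗ[ℝ] V) (u : ℂ ⊗[ℝ] V) :
    conjT (D.baseChange ℂ u) = D.baseChange ℂ (conjT u) := by
  induction u using TensorProduct.induction_on with
  | zero => simp
  | tmul c v => simp [LinearMap.baseChange_tmul]
  | add x y hx hy => simp [hx, hy]

lemma conjT_pow (D : V →ₗ[ℝ] V) (α : ℂ) (k : ℕ) (u : ℂ ⊗[ℝ] V) :
    conjT (((D.baseChange ℂ - α • 1) ^ k) u) =
      ((D.baseChange ℂ - (starRingEnd ℂ α) • 1) ^ k) (conjT u) := by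
  induction k generalizing u with
  | zero => simp
  | succ k ih =>
      have hstep : ∀ y : ℂ ⊗[ℝ] V, conjT ((D.baseChange ℂ - α • 1) y) =
          (D.baseChange ℂ - (starRingEnd ℂ α) • 1) (conjT y) := by
        intro y
        rw [LinearMap.sub_apply, LinearMap.sub_apply, map_sub, conjT_baseChange,
          LinearMap.smul_apply, LinearMap.smul_apply, Module.End.one_apply, Module.End.one_apply,
          conjT_smul]
      rw [pow_succ, pow_succ, Module.End.mul_apply, Module.End.mul_apply, ih, hstep]

lemma conjT_mem_maxGenEigenspace (D : V →ₗ[ℝ] V) (α : ℂ) {u : ℂ ⊗[ℝ] V}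
    (hu : u ∈ Module.End.maxGenEigenspace (D.baseChange ℂ) α) :
    conjT u ∈ Module.End.maxGenEigenspace (D.baseChange ℂ) (starRingEnd ℂ α) := by
  rw [Module.End.mem_maxGenEigenspace] at hu ⊢
  obtain ⟨k, hk⟩ := hu
  exact ⟨k, by rw [← conjT_pow, hk, map_zero]⟩

/-- modular-lattice argument: subfamily of an independent family covering everything. -/
lemma eq_of_le_of_iSup_eq_top {ι : Type*} {X : Type*} [AddCommGroup X] [Module ℂ X]
    (p q : ι → Submodule ℂ X) (hle : ∀ i, p i ≤ q i) (hp : ⨆ i, p i = ⊤)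
    (hq : iSupIndep q) (i : ι) : p i = q i := by
  refine le_antisymm (hle i) ?_
  set R : Submodule ℂ X := ⨆ j, ⨆ _ : j ≠ i, q j with hR
  have hsup : (⨆ j, p j) ≤ p i ⊔ R := by
    refine iSup_le fun j => ?_
    by_cases hj : j = i
    · subst hj; exact le_sup_left
    · exact le_sup_of_le_right ((hle j).trans (le_iSup₂ (f := fun j (_ : j ≠ i) => q j) j hj))
  have h1 : q i ≤ p i ⊔ R := le_trans (le_trans le_top hp.ge) hsup
  have h2 : (p i ⊔ R) ⊓ q i = p i := by
    rw [sup_inf_assoc_of_le R (hle i), ((hq i).symm.eq_bot : R ⊓ q i = ⊥), sup_bot_eq]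
  exact le_trans (le_inf h1 le_rfl) h2.le


lemma baseChange_comm (f : V →ₗ[ℝ] W) (D₁ : V →ₗ[ℝ] V) (D₂ : W →ₗ[ℝ] W)
    (h : ∀ x, f (D₁ x) = D₂ (f x)) (u : ℂ ⊗[ℝ] V) :
    f.baseChange ℂ (D₁.baseChange ℂ u) = D₂.baseChange ℂ (f.baseChange ℂ u) := by
  induction u using TensorProduct.induction_on with
  | zero => simp
  | tmul c v => simp [LinearMap.baseChange_tmul, h]
  | add x y hx hy => simp [hx, hy]

lemma conjT_naturality (f : V →ₗ[ℝ] W) (u : ℂ ⊗[ℝ] V) :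
    f.baseChange ℂ (conjT u) = conjT (f.baseChange ℂ u) := by
  induction u using TensorProduct.induction_on with
  | zero => simp
  | tmul c v => simp [LinearMap.baseChange_tmul]
  | add x y hx hy => simp [hx, hy]

lemma pow_intertwine (f : V →ₗ[ℝ] W) (D₁ : V →ₗ[ℝ] V) (D₂ : W →ₗ[ℝ] W)
    (h : ∀ x, f (D₁ x) = D₂ (f x)) (α : ℂ) (k : ℕ) (u : ℂ ⊗[ℝ] V) :
    f.baseChange ℂ (((D₁.baseChange ℂ - α • 1) ^ k) u) =
      ((D₂.baseChange ℂ - α • 1) ^ k) (f.baseChange ℂ u) := by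
  induction k generalizing u with
  | zero => simp
  | succ k ih =>
      have hstep : ∀ y : ℂ ⊗[ℝ] V, f.baseChange ℂ ((D₁.baseChange ℂ - α • 1) y) =
          (D₂.baseChange ℂ - α • 1) (f.baseChange ℂ y) := by
        intro y
        rw [LinearMap.sub_apply, LinearMap.sub_apply, map_sub, baseChange_comm f D₁ D₂ h,
          LinearMap.smul_apply, LinearMap.smul_apply, Module.End.one_apply, Module.End.one_apply,
          map_smul]
      rw [pow_succ, pow_succ, Module.End.mul_apply, Module.End.mul_apply, ih, hstep]

lemma map_spectral {V W : Type*} [AddCommGroup V] [Module ℝ V] [FiniteDimensional ℝ V]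
    [AddCommGroup W] [Module ℝ W] [FiniteDimensional ℝ W]
    (f : V →ₗ[ℝ] W) (hf : Function.Surjective f) (D₁ : V →ₗ[ℝ] V) (D₂ : W →ₗ[ℝ] W)
    (h : ∀ x, f (D₁ x) = D₂ (f x)) (P : ℂ → Prop) (hP : ∀ α, P α → P (starRingEnd ℂ α)) :
    Submodule.map f (spectralSubmodule D₁ P) = spectralSubmodule D₂ P := by
  set F := f.baseChange ℂ with hFdef
  have hFsurj : Function.Surjective F := by
    rw [hFdef, LinearMap.baseChange_eq_ltensor]
    exact LinearMap.lTensor_surjective ℂ hf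
  have hmapsLe : ∀ α : ℂ, Submodule.map F (Module.End.maxGenEigenspace (D₁.baseChange ℂ) α) ≤
      Module.End.maxGenEigenspace (D₂.baseChange ℂ) α := by
    intro α x hx
    rw [Submodule.mem_map] at hx
    obtain ⟨u, hu, rfl⟩ := hx
    rw [Module.End.mem_maxGenEigenspace] at hu ⊢
    obtain ⟨k, hk⟩ := hu
    exact ⟨k, by rw [← pow_intertwine f D₁ D₂ h α k u, hk, map_zero]⟩
  have heq : ∀ α : ℂ, Submodule.map F (Module.End.maxGenEigenspace (D₁.baseChange ℂ) α) =
      Module.End.maxGenEigenspace (D₂.baseChange ℂ) α := by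
    refine eq_of_le_of_iSup_eq_top _ _ hmapsLe ?_
      (Module.End.independent_maxGenEigenspace _)
    rw [← Submodule.map_iSup, Module.End.iSup_maxGenEigenspace_eq_top, Submodule.map_top,
      LinearMap.range_eq_top.mpr hFsurj]
  set T₁ := ⨆ α ∈ {α : ℂ | P α}, Module.End.maxGenEigenspace (D₁.baseChange ℂ) α with hT₁
  set T₂ := ⨆ α ∈ {α : ℂ | P α}, Module.End.maxGenEigenspace (D₂.baseChange ℂ) α with hT₂
  have hT : Submodule.map F T₁ = T₂ := by
    rw [hT₁, hT₂, Submodule.map_iSup]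
    refine iSup_congr fun α => ?_
    rw [Submodule.map_iSup]
    exact iSup_congr fun _ => heq α
  have hstab : ∀ u, u ∈ T₁ → conjT u ∈ T₁ := by
    intro u hu
    rw [hT₁, iSup_subtype'] at hu
    refine Submodule.iSup_induction (motive := fun x => conjT x ∈ T₁) _ hu ?_ (by simp) ?_
    · rintro ⟨α, hα⟩ x hx
      have hx' := conjT_mem_maxGenEigenspace D₁ α hx
      exact le_iSup₂ (f := fun α (_ : α ∈ {α : ℂ | P α}) => Module.End.maxGenEigenspace (D₁.baseChange ℂ) α)
        (starRingEnd ℂ α) (hP α hα) hx'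
    · intro x y hx hy
      rw [map_add]
      exact T₁.add_mem hx hy
  ext w
  simp only [Submodule.mem_map, spectralSubmodule, Submodule.mem_comap, TensorProduct.mk_apply,
    Submodule.restrictScalars_mem, ← hT₁, ← hT₂]
  constructor
  · rintro ⟨y, hy, rfl⟩
    rw [← hT]
    exact ⟨(1 : ℂ) ⊗ₜ[ℝ] y, hy, LinearMap.baseChange_tmul f 1 y⟩
  · intro hw
    rw [← hT] at hw
    obtain ⟨u, hu, hFu⟩ := hw
    refine ⟨rp u, ?_, ?_⟩
    · rw [one_tmul_rp]
      exact Submodule.smul_of_tower_mem T₁ _ (T₁.add_mem hu (hstab u hu))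
    · have hFv : F ((1 : ℂ) ⊗ₜ[ℝ] rp u) = (1 : ℂ) ⊗ₜ[ℝ] w := by
        have hc : F (conjT u) = conjT ((1 : ℂ) ⊗ₜ[ℝ] w) := by
          rw [hFdef, conjT_naturality, ← hFdef, hFu]
        rw [one_tmul_rp, LinearMap.map_smul_of_tower, map_add, hFu, hc, conjT_tmul]
        simp only [map_one]
        rw [← two_smul ℝ, smul_smul]
        norm_num
      have h2 : (1 : ℂ) ⊗ₜ[ℝ] (f (rp u)) = (1 : ℂ) ⊗ₜ[ℝ] w := by
        rw [← LinearMap.baseChange_tmul f 1 (rp u)]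
        exact hFv
      have h3 := congrArg rp h2
      simpa using h3

end SpectralAux

/-- For a surjective homomorphism `π : 𝔤 → 𝔥` of finite-dimensional real Lie
algebras intertwining derivations `D₁` and `D₂`, one has `π(𝔤⁺) = 𝔥⁺`, `π(𝔤⁻) = 𝔥⁻` and
`π(𝔤⁰) = 𝔥⁰`. -/
theorem map_spectralSubmodule_of_surjective
    {L : Type*} [LieRing L] [LieAlgebra ℝ L] [FiniteDimensional ℝ L]
    {M : Type*} [LieRing M] [LieAlgebra ℝ M] [FiniteDimensional ℝ M]
    (π : L →ₗ⁅ℝ⁆ M) (hπ : Function.Surjective π)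
    (D₁ : LieDerivation ℝ L L) (D₂ : LieDerivation ℝ M M)
    (h : ∀ x : L, π (D₁ x) = D₂ (π x)) :
    Submodule.map (π : L →ₗ[ℝ] M) (spectralSubmodule (D₁ : L →ₗ[ℝ] L) (fun α => 0 < α.re)) =
        spectralSubmodule (D₂ : M →ₗ[ℝ] M) (fun α => 0 < α.re) ∧
      Submodule.map (π : L →ₗ[ℝ] M) (spectralSubmodule (D₁ : L →ₗ[ℝ] L) (fun α => α.re < 0)) =
        spectralSubmodule (D₂ : M →ₗ[ℝ] M) (fun α => α.re < 0) ∧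
      Submodule.map (π : L →ₗ[ℝ] M) (spectralSubmodule (D₁ : L →ₗ[ℝ] L) (fun α => α.re = 0)) =
        spectralSubmodule (D₂ : M →ₗ[ℝ] M) (fun α => α.re = 0) := by
  exact ⟨SpectralAux.map_spectral _ hπ _ _ h _ (fun α hα => by simpa using hα),
    SpectralAux.map_spectral _ hπ _ _ h _ (fun α hα => by simpa using hα),
    SpectralAux.map_spectral _ hπ _ _ h _ (fun α hα => by simpa using hα)⟩
end

section
/- Consider the linear control system ẋ = Ax + Bu on ℝ^d with A ∈ ℝ^{d×d}, B ∈ ℝ^{d×m}, and controls u taking values in a compact convex set Ω ⊆ ℝ^m with 0 in its interior. If the system is controllable (every point reachable from every point), then all eigenvalues of A have zero real part. -/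
open Matrix Module.End Set

lemma spectrum_transpose' {n : ℕ} (M : Matrix (Fin n) (Fin n) ℂ) :
    spectrum ℂ Mᵀ = spectrum ℂ M := by
  ext μ
  simp only [spectrum.mem_iff, not_iff_not]
  have : (algebraMap ℂ (Matrix (Fin n) (Fin n) ℂ)) μ - Mᵀ = ((algebraMap ℂ _ μ) - M)ᵀ := by
    simp [Matrix.algebraMap_eq_diagonal, Matrix.transpose_sub, (Matrix.diagonal_transpose _)]
  rw [this, Matrix.isUnit_iff_isUnit_det, Matrix.det_transpose, ← Matrix.isUnit_iff_isUnit_det]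

lemma hasEigenvalue_transpose' {n : ℕ} (M : Matrix (Fin n) (Fin n) ℂ) (α : ℂ)
    (h : Module.End.HasEigenvalue (Matrix.mulVecLin M) α) :
    Module.End.HasEigenvalue (Matrix.mulVecLin Mᵀ) α := by
  rw [← Matrix.toLin'_apply'] at h ⊢
  rw [Module.End.hasEigenvalue_iff_mem_spectrum] at h ⊢
  have e1 := AlgEquiv.spectrum_eq (Matrix.toLinAlgEquiv' (R := ℂ) (n := Fin n)) M
  have e2 := AlgEquiv.spectrum_eq (Matrix.toLinAlgEquiv' (R := ℂ) (n := Fin n)) Mᵀ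
  have c1 : Matrix.toLinAlgEquiv' M = Matrix.toLin' M := rfl
  have c2 : Matrix.toLinAlgEquiv' Mᵀ = Matrix.toLin' Mᵀ := rfl
  rw [c1] at e1; rw [c2] at e2
  rw [e2, spectrum_transpose', ← e1]
  exact h

lemma key_no_pos_re {d m : ℕ}
    (A : Matrix (Fin d) (Fin d) ℝ) (B : Matrix (Fin d) (Fin m) ℝ)
    (Ω : Set (Fin m → ℝ)) (hΩc : IsCompact Ω)
    (hcontrollable : ∀ p q : Fin d → ℝ, ∃ T > (0 : ℝ), ∃ u : ℝ → (Fin m → ℝ),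
      Measurable u ∧ (∀ t : ℝ, u t ∈ Ω) ∧ ∃ x : ℝ → (Fin d → ℝ), x 0 = p ∧ x T = q ∧
        ∀ t ∈ Set.Icc (0 : ℝ) T, HasDerivAt x (A.mulVec (x t) + B.mulVec (u t)) t)
    (α : ℂ)
    (hα : Module.End.HasEigenvalue (Matrix.mulVecLin (A.map (Complex.ofReal))) α)
    (hre : 0 < α.re) : False := by
  set M : Matrix (Fin d) (Fin d) ℂ := A.map (Complex.ofReal) with hM
  obtain ⟨v, hvmem, hv0⟩ := (hasEigenvalue_transpose' M α hα).exists_hasEigenvector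
  have hv : v ᵥ* M = α • v := by
    have := Module.End.mem_eigenspace_iff.mp hvmem
    simpa [Matrix.mulVecLin_apply, Matrix.mulVec_transpose] using this
  set r : ℝ := α.re with hr
  -- the bounded perturbation
  set φ : (Fin m → ℝ) → ℂ := fun w => ∑ i, v i * ((B.mulVec w) i : ℂ) with hφdef
  have hφcont : Continuous φ := by
    apply continuous_finset_sum
    intro i _
    refine continuous_const.mul (Complex.continuous_ofReal.comp ?_)
    simp only [Matrix.mulVec, dotProduct]
    exact continuous_finset_sum _ fun j _ => continuous_const.mul (continuous_apply j)
  obtain ⟨C0, hC0⟩ := hΩc.exists_bound_of_continuousOn hφcont.continuousOn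
  set C : ℝ := max C0 0 with hCdef
  have hC : ∀ w ∈ Ω, ‖φ w‖ ≤ C := fun w hw => (hC0 w hw).trans (le_max_left _ _)
  have hCnn : 0 ≤ C := le_max_right _ _
  -- pick a coordinate where v is nonzero and a far-away starting point p
  obtain ⟨i0, hi0⟩ := Function.ne_iff.mp hv0
  simp only [Pi.zero_apply] at hi0
  set s : ℝ := (C / r + 1) / ‖v i0‖ with hs
  have hvi0 : (0:ℝ) < ‖v i0‖ := norm_pos_iff.mpr hi0
  have hspos : 0 < s := by
    apply div_pos _ hvi0
    positivity
  set p : Fin d → ℝ := fun j => if j = i0 then s else 0 with hp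
  obtain ⟨T, hT, u, hu, huΩ, x, hx0, hxT, hderiv⟩ := hcontrollable p 0
  set y : ℝ → ℂ := fun t => ∑ i, v i * ((x t i : ℝ) : ℂ) with hy
  set g : ℝ → ℂ := fun t => φ (u t) with hg
  -- derivative of y
  have hyderiv : ∀ t ∈ Set.Icc (0:ℝ) T, HasDerivAt y (α * y t + g t) t := by
    intro t ht
    have hxt := hderiv t ht
    have hxi : ∀ i, HasDerivAt (fun t => x t i)
        ((A.mulVec (x t) + B.mulVec (u t)) i) t := hasDerivAt_pi.mp hxt
    have h1 : HasDerivAt y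
        (∑ i, v i * (((A.mulVec (x t) + B.mulVec (u t)) i : ℝ) : ℂ)) t :=
      HasDerivAt.fun_sum fun i _ => ((hxi i).ofReal_comp).const_mul (v i)
    convert h1 using 1
    have key : ∑ i, v i * (((A.mulVec (x t)) i : ℝ) : ℂ) = α * y t := by
      have hcast : (fun i => (((A.mulVec (x t)) i : ℝ) : ℂ))
          = M.mulVec (fun j => ((x t j : ℝ) : ℂ)) := by
        ext i
        simp only [Matrix.mulVec, dotProduct, Matrix.map_apply, hM]
        push_cast
        rfl
      calc ∑ i, v i * (((A.mulVec (x t)) i : ℝ) : ℂ)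
          = v ⬝ᵥ (M.mulVec (fun j => ((x t j : ℝ) : ℂ))) := by
            simp only [dotProduct, ← hcast]
        _ = (α • v) ⬝ᵥ (fun j => ((x t j : ℝ) : ℂ)) := by
            rw [dotProduct_mulVec, hv]
        _ = α * y t := by
            rw [smul_dotProduct]
            simp [hy, dotProduct, smul_eq_mul]
    rw [← key]
    simp only [Pi.add_apply, hg, hφdef]
    push_cast
    rw [← Finset.sum_add_distrib]
    congr 1
    ext i
    ring
  -- z(t) = exp(-α t) y(t)
  set z : ℝ → ℂ := fun t => Complex.exp (-(α * t)) * y t with hz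
  have hzderiv : ∀ t ∈ Set.Icc (0:ℝ) T,
      HasDerivAt z (Complex.exp (-(α * t)) * g t) t := by
    intro t ht
    have hlin : HasDerivAt (fun t : ℝ => -(α * (t : ℂ))) (-α) t := by
      simpa using (((hasDerivAt_id t).ofReal_comp).const_mul α).fun_neg
    have he : HasDerivAt (fun t : ℝ => Complex.exp (-(α * t)))
        (Complex.exp (-(α * t)) * (-α)) t := hlin.cexp
    have := he.fun_mul (hyderiv t ht)
    refine this.congr_deriv ?_
    ring
  -- apply the fencing theorem to f = z - z 0
  set f : ℝ → ℂ := fun t => z t - z 0 with hf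
  have hfc : ContinuousOn f (Set.Icc 0 T) := fun t ht =>
    (((hzderiv t ht).continuousAt.sub continuousAt_const).continuousWithinAt)
  have hfd : ∀ t ∈ Set.Ico (0:ℝ) T,
      HasDerivWithinAt f (Complex.exp (-(α * t)) * g t) (Set.Ici t) t := by
    intro t ht
    exact (((hzderiv t (Set.Ico_subset_Icc_self ht)).sub_const _)).hasDerivWithinAt
  set Bnd : ℝ → ℝ := fun t => C / r - C / r * Real.exp (-(r * t)) with hBnd
  have hBd : ∀ t : ℝ, HasDerivAt Bnd (C * Real.exp (-(r * t))) t := by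
    intro t
    have h1 : HasDerivAt (fun t : ℝ => Real.exp (-(r * t)))
        (Real.exp (-(r * t)) * (-r)) t := by
      simpa using (((hasDerivAt_id t).const_mul r).neg).exp
    have h2 := ((h1.const_mul (C / r)).const_sub (C / r))
    refine h2.congr_deriv ?_
    field_simp [ne_of_gt hre]
  have hbound : ∀ t ∈ Set.Ico (0:ℝ) T,
      ‖Complex.exp (-(α * t)) * g t‖ ≤ C * Real.exp (-(r * t)) := by
    intro t _
    rw [norm_mul]
    have h1 : ‖Complex.exp (-(α * t))‖ = Real.exp (-(r * t)) := by
      rw [Complex.norm_exp]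
      congr 1
      simp [hr, Complex.mul_re]
    rw [h1, mul_comm]
    exact mul_le_mul_of_nonneg_right (hC _ (huΩ t)) (Real.exp_nonneg _)
  have ha0 : ‖f 0‖ ≤ Bnd 0 := by
    simp [hf, hBnd]
  have hfin := image_norm_le_of_norm_deriv_right_le_deriv_boundary hfc hfd ha0 hBd hbound
    (Set.right_mem_Icc.mpr hT.le)
  -- compute both sides
  have hyT : y T = 0 := by simp [hy, hxT]
  have hzT : z T = 0 := by simp [hz, hyT]
  have hy0 : y 0 = v i0 * (s : ℂ) := by
    simp only [hy, hx0, hp]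
    rw [Finset.sum_eq_single i0]
    · simp
    · intro j _ hj; simp [hj]
    · intro h; exact absurd (Finset.mem_univ i0) h
  have hz0 : z 0 = v i0 * (s : ℂ) := by
    simp [hz, hy0]
  have hnorm : ‖f T‖ = C / r + 1 := by
    simp only [hf, hzT, hz0, zero_sub, norm_neg, norm_mul, Complex.norm_real,
      Real.norm_eq_abs, abs_of_pos hspos]
    have hr0 : r ≠ 0 := ne_of_gt hre
    have hv0' : ‖v i0‖ ≠ 0 := ne_of_gt hvi0
    have habs : ‖v i0‖ ≠ 0 := by exact hv0'
    rw [hs]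
    field_simp
  have hBT : Bnd T ≤ C / r := by
    simp only [hBnd]
    have : 0 ≤ C / r * Real.exp (-(r * T)) := by positivity
    linarith
  rw [hnorm] at hfin
  have : C / r + 1 ≤ C / r := hfin.trans hBT
  linarith

/-- If the linear control system `ẋ = Ax + Bu` on `ℝ^d`, with controls
taking values in a compact convex set `Ω ⊆ ℝ^m` having `0` in its interior, is controllable,
then all (complex) eigenvalues of `A` have zero real part. -/
theorem eigenvalues_re_eq_zero_of_controllable {d m : ℕ}
    (A : Matrix (Fin d) (Fin d) ℝ) (B : Matrix (Fin d) (Fin m) ℝ)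
    (Ω : Set (Fin m → ℝ)) (hΩc : IsCompact Ω) (hΩconv : Convex ℝ Ω)
    (hΩ0 : 0 ∈ interior Ω)
    (hcontrollable : ∀ p q : Fin d → ℝ, ∃ T > (0 : ℝ), ∃ u : ℝ → (Fin m → ℝ),
      Measurable u ∧ (∀ t : ℝ, u t ∈ Ω) ∧ ∃ x : ℝ → (Fin d → ℝ), x 0 = p ∧ x T = q ∧
        ∀ t ∈ Set.Icc (0 : ℝ) T, HasDerivAt x (A.mulVec (x t) + B.mulVec (u t)) t)
    (α : ℂ)
    (hα : Module.End.HasEigenvalue (Matrix.mulVecLin (A.map (Complex.ofReal))) α) :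
    α.re = 0 := by
  by_contra hne
  rcases lt_or_gt_of_ne hne with hneg | hpos
  · -- α.re < 0 : time-reverse the system and use the key lemma for -A, -B, -α
    have hrev : ∀ p q : Fin d → ℝ, ∃ T > (0 : ℝ), ∃ u : ℝ → (Fin m → ℝ),
        Measurable u ∧ (∀ t : ℝ, u t ∈ Ω) ∧ ∃ x : ℝ → (Fin d → ℝ), x 0 = p ∧ x T = q ∧
          ∀ t ∈ Set.Icc (0 : ℝ) T,
            HasDerivAt x ((-A).mulVec (x t) + (-B).mulVec (u t)) t := by
      intro p q
      obtain ⟨T, hT, u, hu, huΩ, x, hx0, hxT, hd⟩ := hcontrollable q p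
      refine ⟨T, hT, fun t => u (T - t), hu.comp (measurable_const.sub measurable_id),
        fun t => huΩ _, fun t => x (T - t), by simpa using hxT, by simpa using hx0, ?_⟩
      intro t ht
      have hmem : T - t ∈ Set.Icc (0:ℝ) T := ⟨by linarith [ht.2], by linarith [ht.1]⟩
      have hin : HasDerivAt (fun t : ℝ => T - t) (-1 : ℝ) t := by
        simpa using ((hasDerivAt_const t T).fun_sub (hasDerivAt_id t))
      have h1 := HasDerivAt.scomp t (hd (T - t) hmem) hin
      refine h1.congr_deriv ?_
      funext i
      simp [Matrix.neg_mulVec]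
      ring
    have hαrev : Module.End.HasEigenvalue
        (Matrix.mulVecLin ((-A).map (Complex.ofReal))) (-α) := by
      obtain ⟨w, hwmem, hw0⟩ := hα.exists_hasEigenvector
      have hw : (A.map (Complex.ofReal)).mulVec w = α • w := by
        simpa [Matrix.mulVecLin_apply] using Module.End.mem_eigenspace_iff.mp hwmem
      refine Module.End.hasEigenvalue_of_hasEigenvector
        ⟨Module.End.mem_eigenspace_iff.mpr ?_, hw0⟩
      have hmapneg : (-A).map (Complex.ofReal) = -(A.map (Complex.ofReal)) := by
        ext i j; simp
      rw [Matrix.mulVecLin_apply, hmapneg, Matrix.neg_mulVec, hw, neg_smul]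
    exact key_no_pos_re (-A) (-B) Ω hΩc hrev (-α) hαrev (by simpa using hneg.le.lt_of_ne hne)
  · exact key_no_pos_re A B Ω hΩc hcontrollable α hα hpos
end
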